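/- arXiv:2109.13796 — 2 statements merged into one kernel-verified Lean document; each statement's English description precedes it below -/
import Mathlib

section
/- Let (L, L̃) be bivariate normal under P with means (μ₁, μ₂), standard deviations (σ₁, σ₂), correlation ρ, and suppose under Q the marginal of L̃ is N(μ₂ − σ₂κ, σ₂²) while the P-conditional law of L given L̃ = x is N(μ₁ + ρ(σ₁/σ₂)(x − μ₂), (1−ρ²)σ₁²). With π⁽²⁾[X|F⁽¹⁾] = E^P[X|F⁽¹⁾] + β√(Var^P[X|F⁽¹⁾]) and outer valuation E^Q, the two-step financial value of S = L equals Π⁽²⁾[S] = μ₁ − ρσ₁κ + βσ₁√(1−ρ²), and hence Π⁽²⁾[S] − Π⁽¹⁾[S] = σ₁[β(√(1−ρ²) − 1) − ρκ], where Π⁽¹⁾[S] = μ₁ + βσ₁. -/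
open MeasureTheory ProbabilityTheory
open scoped NNReal

lemma gaussian_symm (v : ℝ≥0) :
    Measure.map (fun x : ℝ => -x) (gaussianReal 0 v) = gaussianReal 0 v := by
  have h := gaussianReal_map_const_mul (μ := 0) (v := v) (-1)
  simpa using h

lemma integral_id_gaussian_zero (v : ℝ≥0) : ∫ x, x ∂(gaussianReal 0 v) = 0 := by
  have h : ∫ x, x ∂(gaussianReal 0 v)
      = ∫ x, x ∂(Measure.map (fun x : ℝ => -x) (gaussianReal 0 v)) := by
    rw [gaussian_symm]
  rw [integral_map (f := fun x : ℝ => x) measurable_neg.aemeasurable measurable_id.aestronglyMeasurable] at h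
  rw [integral_neg] at h
  linarith [h]

lemma integral_id_gaussian (m : ℝ) (v : ℝ≥0)
    (hI : Integrable id (gaussianReal m v)) :
    ∫ x, x ∂(gaussianReal m v) = m := by
  have hmap : Measure.map (fun x : ℝ => x + m) (gaussianReal 0 v) = gaussianReal m v := by
    simpa using gaussianReal_map_add_const (μ := 0) (v := v) m
  have hmap' : Measure.map (fun x : ℝ => x + (-m)) (gaussianReal m v) = gaussianReal 0 v := by
    simpa using gaussianReal_map_add_const (μ := m) (v := v) (-m)
  have hI0 : Integrable (fun x : ℝ => x) (gaussianReal 0 v) := by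
    rw [← hmap']
    rw [integrable_map_measure (g := fun x : ℝ => x) measurable_id.aestronglyMeasurable
      (measurable_id'.add_const (-m)).aemeasurable]
    exact hI.add (integrable_const (-m))
  calc ∫ x, x ∂(gaussianReal m v)
      = ∫ x, x ∂(Measure.map (fun x : ℝ => x + m) (gaussianReal 0 v)) := by rw [hmap]
    _ = ∫ x, (x + m) ∂(gaussianReal 0 v) := by
        rw [integral_map (φ := fun x : ℝ => x + m) (f := fun x : ℝ => x) (measurable_id'.add_const m).aemeasurable measurable_id.aestronglyMeasurable]
    _ = (∫ x, x ∂(gaussianReal 0 v)) + m := by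
        rw [integral_add hI0 (integrable_const m)]
        simp
    _ = m := by rw [integral_id_gaussian_zero]; ring

/-- in the Gaussian longevity-bond example (L̃ ∼ N(μ₂ − σ₂κ, σ₂²) under `Q`,
conditional valuation `π⁽²⁾[L|F⁽¹⁾] = μ₁ + ρ(σ₁/σ₂)(L̃ − μ₂) + βσ₁√(1−ρ²)`), the two-step
financial value of `S = L` is `Pi2 = μ₁ − ρσ₁κ + βσ₁√(1−ρ²)` and its difference with the
two-step actuarial value `Pi1 = μ₁ + βσ₁` is `σ₁[β(√(1−ρ²) − 1) − ρκ]`. -/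
theorem stmt_11 {Ω : Type*} {mΩ : MeasurableSpace Ω} (P Q : Measure Ω)
    [IsProbabilityMeasure P] [IsProbabilityMeasure Q]
    (L Lt : Ω → ℝ) (μ₁ μ₂ σ₁ σ₂ ρ β κ : ℝ)
    (hσ₁ : 0 < σ₁) (hσ₂ : 0 < σ₂) (hβ : 0 ≤ β) (hρ : |ρ| ≤ 1) (hκ : 0 < κ)
    (hQlaw : Measure.map Lt Q = gaussianReal (μ₂ - σ₂ * κ) (Real.toNNReal (σ₂ ^ 2)))
    (hQint : Integrable Lt Q)
    (condval : Ω → ℝ)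
    (hcond : condval = fun x => μ₁ + ρ * (σ₁ / σ₂) * (Lt x - μ₂)
      + β * σ₁ * Real.sqrt (1 - ρ ^ 2))
    (Pi1 Pi2 : ℝ) (hPi2 : Pi2 = ∫ x, condval x ∂Q) (hPi1 : Pi1 = μ₁ + β * σ₁) :
    Pi2 = μ₁ - ρ * σ₁ * κ + β * σ₁ * Real.sqrt (1 - ρ ^ 2) ∧
    Pi2 - Pi1 = σ₁ * (β * (Real.sqrt (1 - ρ ^ 2) - 1) - ρ * κ) := by
  have hσ₂' : σ₂ ≠ 0 := ne_of_gt hσ₂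
  -- E^Q[Lt] = μ₂ - σ₂κ
  have hIid : Integrable id (gaussianReal (μ₂ - σ₂ * κ) (Real.toNNReal (σ₂ ^ 2))) := by
    rw [← hQlaw, integrable_map_measure (g := id) aestronglyMeasurable_id hQint.aemeasurable]
    exact hQint
  have hmean : ∫ x, Lt x ∂Q = μ₂ - σ₂ * κ := by
    have : ∫ x, Lt x ∂Q = ∫ x, x ∂(Measure.map Lt Q) := by
      rw [integral_map (f := fun x : ℝ => x) hQint.aemeasurable measurable_id.aestronglyMeasurable]
    rw [this, hQlaw, integral_id_gaussian _ _ hIid]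
  -- compute the integral
  have hint : ∫ x, condval x ∂Q
      = μ₁ + ρ * (σ₁ / σ₂) * ((μ₂ - σ₂ * κ) - μ₂) + β * σ₁ * Real.sqrt (1 - ρ ^ 2) := by
    rw [hcond]
    have h1 : Integrable (fun x => ρ * (σ₁ / σ₂) * (Lt x - μ₂)) Q :=
      ((hQint.sub (integrable_const μ₂)).const_mul _)
    have : (fun x => μ₁ + ρ * (σ₁ / σ₂) * (Lt x - μ₂) + β * σ₁ * Real.sqrt (1 - ρ ^ 2))
        = fun x => (ρ * (σ₁ / σ₂) * (Lt x - μ₂))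
          + (μ₁ + β * σ₁ * Real.sqrt (1 - ρ ^ 2)) := by
      funext x; ring
    rw [this, integral_add h1 (integrable_const _), integral_const]
    simp only [measure_univ, probReal_univ, ENNReal.toReal_one, one_smul, smul_eq_mul]
    rw [integral_const_mul, integral_sub hQint (integrable_const μ₂), integral_const]
    simp only [measure_univ, probReal_univ, ENNReal.toReal_one, one_smul, smul_eq_mul]
    rw [hmean]; ring
  have hPi2' : Pi2 = μ₁ - ρ * σ₁ * κ + β * σ₁ * Real.sqrt (1 - ρ ^ 2) := by
    rw [hPi2, hint]; field_simp; ring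
  exact ⟨hPi2', by rw [hPi2', hPi1]; ring⟩
end

section
/- In the binary equity-linked example, if Q[Y=200] − P[Y=200] = κ and Q[Y=200|I=1] − P[Y=200|I=1] = κ, then the two-step valuations satisfy Π⁽²⁾[S] − Π⁽¹⁾[S] = 100κ(p_I − p_{I|Y=200}) + 100κβ(√(p_I(1−p_I)) − √(p_{I|Y=200}(1−p_{I|Y=200}))) + 100β(p_{Y|I=1}√(p_I(1−p_I)) − p_Y√(p_{I|Y=200}(1−p_{I|Y=200}))), where p_Y = P[Y=200], p_{Y|I=1} = P[Y=200|I=1]. In particular if (Y,I) are independent under both P and Q then Π⁽¹⁾[S] = Π⁽²⁾[S]. -/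
open MeasureTheory

lemma my_funext_of_ae (P : Measure (Bool × Bool)) (hpos : ∀ ω : Bool × Bool, P {ω} ≠ 0)
    {f g : Bool × Bool → ℝ} (h : f =ᵐ[P] g) : f = g := by
  funext x
  by_contra hne
  refine hpos x (measure_mono_null ?_ (ae_iff.mp h))
  intro y hy
  simp only [Set.mem_singleton_iff] at hy
  subst hy
  exact hne

lemma my_condexp_comap (P : Measure (Bool × Bool)) [IsProbabilityMeasure P]
    (hpos : ∀ ω : Bool × Bool, P {ω} ≠ 0) (p : Bool × Bool → Bool) (hp : Measurable p)
    (f : Bool × Bool → ℝ) (h : Bool → ℝ)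
    (heq : ∀ b : Bool, ∫ x in p ⁻¹' {b}, f x ∂P = ∫ x in p ⁻¹' {b}, h (p x) ∂P) :
    P[f | MeasurableSpace.comap p ⊤] = fun ω => h (p ω) := by
  have hm : MeasurableSpace.comap p ⊤ ≤ (by infer_instance : MeasurableSpace (Bool × Bool)) := by
    rintro s ⟨t, -, rfl⟩
    exact hp trivial
  have hcompl : (p ⁻¹' {true})ᶜ = p ⁻¹' {false} := by
    ext x; cases hx : p x <;> simp [hx]
  refine (my_funext_of_ae P hpos
    (ae_eq_condExp_of_forall_setIntegral_eq hm (Integrable.of_finite)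
      (fun s _ _ => Integrable.of_finite.integrableOn) ?_ ?_)).symm
  · rintro s ⟨t, -, rfl⟩ -
    have ht : t = ∅ ∨ t = {false} ∨ t = {true} ∨ t = Set.univ := by
      by_cases h1 : true ∈ t <;> by_cases h2 : false ∈ t
      · right; right; right; ext b; cases b <;> simp [h1, h2]
      · right; right; left; ext b; cases b <;> simp [h1, h2]
      · right; left; ext b; cases b <;> simp [h1, h2]
      · left; ext b; cases b <;> simp [h1, h2]
    have hs : MeasurableSet (p ⁻¹' {true}) := (Set.toFinite _).measurableSet
    rcases ht with rfl | rfl | rfl | rfl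
    · simp
    · exact (heq false).symm
    · exact (heq true).symm
    · simp only [Set.preimage_univ, Measure.restrict_univ]
      calc ∫ x, h (p x) ∂P
          = (∫ x in p ⁻¹' {true}, h (p x) ∂P) + ∫ x in (p ⁻¹' {true})ᶜ, h (p x) ∂P :=
            (integral_add_compl hs Integrable.of_finite).symm
        _ = (∫ x in p ⁻¹' {true}, f x ∂P) + ∫ x in (p ⁻¹' {true})ᶜ, f x ∂P := by
            rw [hcompl, (heq true).symm, (heq false).symm]
        _ = ∫ x, f x ∂P := integral_add_compl hs Integrable.of_finite
  · exact StronglyMeasurable.aestronglyMeasurable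
      (Measurable.stronglyMeasurable
        (measurable_from_top.comp (comap_measurable p)))

lemma my_setIntegral_pair (μ : Measure (Bool × Bool)) [IsFiniteMeasure μ]
    (f : Bool × Bool → ℝ) (x y : Bool × Bool) (hxy : x ≠ y) :
    ∫ z in ({x, y} : Set (Bool × Bool)), f z ∂μ
      = (μ {x}).toReal * f x + (μ {y}).toReal * f y := by
  have h : ({x, y} : Set (Bool × Bool)) = (({x, y} : Finset (Bool × Bool)) : Set (Bool × Bool)) := by
    simp
  rw [h, integral_finset _ _, Finset.sum_pair hxy]
  · simp [Measure.real]
  · exact Integrable.of_finite.integrableOn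

lemma my_meas_pair (μ : Measure (Bool × Bool)) [IsFiniteMeasure μ] (x y : Bool × Bool)
    (hxy : x ≠ y) :
    (μ ({x, y} : Set (Bool × Bool))).toReal = (μ {x}).toReal + (μ {y}).toReal := by
  rw [Set.insert_eq, measure_union (by simpa using hxy) (measurableSet_singleton y),
    ENNReal.toReal_add (measure_ne_top _ _) (measure_ne_top _ _)]

lemma my_mass_sum (μ : Measure (Bool × Bool)) [IsProbabilityMeasure μ] :
    (μ {((true, true) : Bool × Bool)}).toReal + (μ {((true, false) : Bool × Bool)}).toReal
      + (μ {((false, true) : Bool × Bool)}).toReal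
      + (μ {((false, false) : Bool × Bool)}).toReal = 1 := by
  have h := integral_fintype (μ := μ) (f := fun _ => (1 : ℝ)) Integrable.of_finite
  simp only [integral_const, measure_univ, ENNReal.toReal_one, Measure.real, one_smul, smul_eq_mul, mul_one,
    Fintype.sum_prod_type, Fintype.sum_bool] at h
  linarith

lemma my_integral_eval (μ : Measure (Bool × Bool)) [IsFiniteMeasure μ] (f : Bool × Bool → ℝ) :
    ∫ x, f x ∂μ = (μ {((true, true) : Bool × Bool)}).toReal * f (true, true)
      + (μ {((true, false) : Bool × Bool)}).toReal * f (true, false)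
      + (μ {((false, true) : Bool × Bool)}).toReal * f (false, true)
      + (μ {((false, false) : Bool × Bool)}).toReal * f (false, false) := by
  rw [integral_fintype (f := f) Integrable.of_finite]
  simp only [Fintype.sum_prod_type, Fintype.sum_bool, smul_eq_mul, Measure.real]
  ring

lemma my_sqrt_sq_mul {a : ℝ} (ha : 0 ≤ a) (x : ℝ) :
    Real.sqrt (a ^ 2 * x) = a * Real.sqrt x := by
  rw [Real.sqrt_mul (sq_nonneg a), Real.sqrt_sq ha]

/-- in the binary equity-linked example, if the risk premium `κ` satisfies
`q_Y = p_Y + κ` and `q_{Y|I=1} = p_{Y|I=1} + κ`, then the difference of the two-step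
valuations is the displayed formula; in particular, under independence of `(Y, I)` under
both `P` and `Q`, the two valuations coincide. -/
theorem stmt_14 (P Q : Measure (Bool × Bool)) [IsProbabilityMeasure P] [IsProbabilityMeasure Q]
    (hPpos : ∀ ω : Bool × Bool, P {ω} ≠ 0) (hQpos : ∀ ω : Bool × Bool, Q {ω} ≠ 0)
    (β κ : ℝ) (hβ : 0 ≤ β)
    (S : Bool × Bool → ℝ)
    (hS : S = fun ω => if ω.1 then (if ω.2 then (100 : ℝ) else 0) else 0)
    (mY mI : MeasurableSpace (Bool × Bool))
    (hmY : mY = MeasurableSpace.comap Prod.fst ⊤)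
    (hmI : mI = MeasurableSpace.comap Prod.snd ⊤)
    (qY pY pI pIY qYI pYI : ℝ)
    (hqY : qY = (Q {ω : Bool × Bool | ω.1 = true}).toReal)
    (hpY : pY = (P {ω : Bool × Bool | ω.1 = true}).toReal)
    (hpI : pI = (P {ω : Bool × Bool | ω.2 = true}).toReal)
    (hpIY : pIY = (P {ω : Bool × Bool | ω.1 = true ∧ ω.2 = true}).toReal
      / (P {ω : Bool × Bool | ω.1 = true}).toReal)
    (hqYI : qYI = (Q {ω : Bool × Bool | ω.1 = true ∧ ω.2 = true}).toReal
      / (Q {ω : Bool × Bool | ω.2 = true}).toReal)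
    (hpYI : pYI = (P {ω : Bool × Bool | ω.1 = true ∧ ω.2 = true}).toReal
      / (P {ω : Bool × Bool | ω.2 = true}).toReal)
    (hκ1 : qY = pY + κ) (hκ2 : qYI = pYI + κ)
    (Pi1 Pi2 : ℝ)
    (hPi1 : Pi1 = ∫ ω, ((P[S|mY]) ω
      + β * Real.sqrt ((P[fun ω' => (S ω' - (P[S|mY]) ω') ^ 2|mY]) ω)) ∂Q)
    (hPi2 : Pi2 = (∫ ω, (Q[S|mI]) ω ∂P)
      + β * Real.sqrt (∫ ω, ((Q[S|mI]) ω - ∫ ω', (Q[S|mI]) ω' ∂P) ^ 2 ∂P)) :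
    Pi2 - Pi1 = 100 * κ * (pI - pIY)
      + 100 * κ * β * (Real.sqrt (pI * (1 - pI)) - Real.sqrt (pIY * (1 - pIY)))
      + 100 * β * (pYI * Real.sqrt (pI * (1 - pI)) - pY * Real.sqrt (pIY * (1 - pIY))) ∧
    (pIY = pI → pYI = pY → qYI = qY → Pi1 = Pi2) := by
  subst hS hmY hmI
  set pa := (P {((true, true) : Bool × Bool)}).toReal with hpa
  set pb := (P {((true, false) : Bool × Bool)}).toReal with hpb
  set pc := (P {((false, true) : Bool × Bool)}).toReal with hpc
  set pd := (P {((false, false) : Bool × Bool)}).toReal with hpd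
  set qa := (Q {((true, true) : Bool × Bool)}).toReal with hqa
  set qb := (Q {((true, false) : Bool × Bool)}).toReal with hqb
  set qc := (Q {((false, true) : Bool × Bool)}).toReal with hqc
  set qd := (Q {((false, false) : Bool × Bool)}).toReal with hqd
  have hpa0 : 0 < pa := ENNReal.toReal_pos (hPpos _) (measure_ne_top _ _)
  have hpb0 : 0 < pb := ENNReal.toReal_pos (hPpos _) (measure_ne_top _ _)
  have hpc0 : 0 < pc := ENNReal.toReal_pos (hPpos _) (measure_ne_top _ _)
  have hpd0 : 0 < pd := ENNReal.toReal_pos (hPpos _) (measure_ne_top _ _)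
  have hqa0 : 0 < qa := ENNReal.toReal_pos (hQpos _) (measure_ne_top _ _)
  have hqb0 : 0 < qb := ENNReal.toReal_pos (hQpos _) (measure_ne_top _ _)
  have hqc0 : 0 < qc := ENNReal.toReal_pos (hQpos _) (measure_ne_top _ _)
  have hYset : {ω : Bool × Bool | ω.1 = true} = ({((true, true) : Bool × Bool), (true, false)} : Set (Bool × Bool)) := by
    ext ⟨a, b⟩; cases a <;> cases b <;> simp
  have hIset : {ω : Bool × Bool | ω.2 = true} = ({((true, true) : Bool × Bool), (false, true)} : Set (Bool × Bool)) := by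
    ext ⟨a, b⟩; cases a <;> cases b <;> simp
  have hYIset : {ω : Bool × Bool | ω.1 = true ∧ ω.2 = true} = ({((true, true) : Bool × Bool)} : Set (Bool × Bool)) := by
    ext ⟨a, b⟩; cases a <;> cases b <;> simp
  have hfstT : Prod.fst ⁻¹' ({true} : Set Bool) = ({((true, true) : Bool × Bool), (true, false)} : Set (Bool × Bool)) := by
    ext ⟨a, b⟩; cases a <;> cases b <;> simp
  have hfstF : Prod.fst ⁻¹' ({false} : Set Bool) = ({((false, true) : Bool × Bool), (false, false)} : Set (Bool × Bool)) := by
    ext ⟨a, b⟩; cases a <;> cases b <;> simp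
  have hsndT : Prod.snd ⁻¹' ({true} : Set Bool) = ({((true, true) : Bool × Bool), (false, true)} : Set (Bool × Bool)) := by
    ext ⟨a, b⟩; cases a <;> cases b <;> simp
  have hsndF : Prod.snd ⁻¹' ({false} : Set Bool) = ({((true, false) : Bool × Bool), (false, false)} : Set (Bool × Bool)) := by
    ext ⟨a, b⟩; cases a <;> cases b <;> simp
  rw [hYset, my_meas_pair Q _ _ (by decide), ← hqa, ← hqb] at hqY
  rw [hYset, my_meas_pair P _ _ (by decide), ← hpa, ← hpb] at hpY
  rw [hIset, my_meas_pair P _ _ (by decide), ← hpa, ← hpc] at hpI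
  rw [hYIset, hYset, my_meas_pair P _ _ (by decide), ← hpa, ← hpb] at hpIY
  rw [hYIset, hIset, my_meas_pair Q _ _ (by decide), ← hqa, ← hqc] at hqYI
  rw [hYIset, hIset, my_meas_pair P _ _ (by decide), ← hpa, ← hpc] at hpYI
  have hPtot : pa + pb + pc + pd = 1 := by
    have h := my_mass_sum P
    rw [← hpa, ← hpb, ← hpc, ← hpd] at h
    exact h
  have hpab : pa + pb ≠ 0 := by positivity
  have hpac : pa + pc ≠ 0 := by positivity
  have hqac : qa + qc ≠ 0 := by positivity
  have hpIY0 : 0 ≤ pIY := by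
    rw [hpIY]
    positivity
  have hqYI0 : 0 ≤ qYI := by
    rw [hqYI]
    positivity
  -- first conditional expectation
  have hg1 : P[(fun ω : Bool × Bool => if ω.1 then (if ω.2 then (100 : ℝ) else 0) else 0) |
      MeasurableSpace.comap Prod.fst ⊤]
      = fun ω => (fun b : Bool => if b then 100 * pIY else 0) ω.1 := by
    refine my_condexp_comap P hPpos Prod.fst measurable_fst _
      (fun b : Bool => if b then 100 * pIY else 0) (fun b => ?_)
    cases b
    · rw [hfstF, my_setIntegral_pair P _ _ _ (by decide),
        my_setIntegral_pair P _ _ _ (by decide)]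
      norm_num
    · rw [hfstT, my_setIntegral_pair P _ _ _ (by decide),
        my_setIntegral_pair P _ _ _ (by decide), ← hpa, ← hpb]
      simp only [Bool.false_eq_true, if_true, if_false]
      rw [hpIY]
      field_simp
      ring
  rw [hg1] at hPi1
  -- conditional variance
  have hg2 : P[(fun ω' : Bool × Bool =>
        ((if ω'.1 then (if ω'.2 then (100 : ℝ) else 0) else 0)
          - (fun b : Bool => if b then 100 * pIY else 0) ω'.1) ^ 2) |
      MeasurableSpace.comap Prod.fst ⊤]
      = fun ω => (fun b : Bool => if b then 10000 * (pIY * (1 - pIY)) else 0) ω.1 := by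
    refine my_condexp_comap P hPpos Prod.fst measurable_fst _
      (fun b : Bool => if b then 10000 * (pIY * (1 - pIY)) else 0) (fun b => ?_)
    cases b
    · rw [hfstF, my_setIntegral_pair P _ _ _ (by decide),
        my_setIntegral_pair P _ _ _ (by decide)]
      norm_num
    · rw [hfstT, my_setIntegral_pair P _ _ _ (by decide),
        my_setIntegral_pair P _ _ _ (by decide), ← hpa, ← hpb]
      simp only [Bool.false_eq_true, if_true, if_false]
      rw [hpIY]
      field_simp
      ring
  rw [hg2] at hPi1
  rw [my_integral_eval Q] at hPi1
  simp only [if_true, if_false] at hPi1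
  have hsq1 : Real.sqrt (10000 * (pIY * (1 - pIY))) = 100 * Real.sqrt (pIY * (1 - pIY)) := by
    rw [show (10000 : ℝ) = 100 ^ 2 by norm_num, my_sqrt_sq_mul (by norm_num)]
  rw [hsq1, ← hqa, ← hqb, ← hqc, ← hqd] at hPi1
  norm_num at hPi1
  -- third conditional expectation
  have hg3 : Q[(fun ω : Bool × Bool => if ω.1 then (if ω.2 then (100 : ℝ) else 0) else 0) |
      MeasurableSpace.comap Prod.snd ⊤]
      = fun ω => (fun b : Bool => if b then 100 * qYI else 0) ω.2 := by
    refine my_condexp_comap Q hQpos Prod.snd measurable_snd _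
      (fun b : Bool => if b then 100 * qYI else 0) (fun b => ?_)
    cases b
    · rw [hsndF, my_setIntegral_pair Q _ _ _ (by decide),
        my_setIntegral_pair Q _ _ _ (by decide)]
      norm_num
    · rw [hsndT, my_setIntegral_pair Q _ _ _ (by decide),
        my_setIntegral_pair Q _ _ _ (by decide), ← hqa, ← hqc]
      simp only [Bool.false_eq_true, if_true, if_false]
      rw [hqYI]
      field_simp
      ring
  rw [hg3] at hPi2
  have hmean : ∫ ω' : Bool × Bool, (fun b : Bool => if b then 100 * qYI else 0) ω'.2 ∂P
      = (pa + pc) * (100 * qYI) := by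
    rw [my_integral_eval P, ← hpa, ← hpb, ← hpc, ← hpd]
    norm_num
    ring
  rw [hmean] at hPi2
  have hvar : ∫ ω : Bool × Bool,
      ((fun b : Bool => if b then 100 * qYI else 0) ω.2 - (pa + pc) * (100 * qYI)) ^ 2 ∂P
      = (100 * qYI) ^ 2 * ((pa + pc) * (1 - (pa + pc))) := by
    rw [my_integral_eval P, ← hpa, ← hpb, ← hpc, ← hpd]
    simp only [Bool.false_eq_true, if_true, if_false]
    linear_combination (pa + pc) ^ 2 * (100 * qYI) ^ 2 * hPtot
  rw [hvar, my_sqrt_sq_mul (by positivity)] at hPi2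
  -- Bayes
  have hBayes : pIY * pY = pYI * pI := by
    rw [hpIY, hpYI, hpY, hpI]
    field_simp
  have hP1 : Pi1 = qY * (100 * pIY + 100 * β * Real.sqrt (pIY * (1 - pIY))) := by
    rw [hPi1, hqY]; ring
  have hP2 : Pi2 = 100 * qYI * pI + 100 * β * qYI * Real.sqrt (pI * (1 - pI)) := by
    rw [hPi2, hpI]; ring
  constructor
  · rw [hP1, hP2]
    linear_combination (100 * pI + 100 * β * Real.sqrt (pI * (1 - pI))) * hκ2
      - (100 * pIY + 100 * β * Real.sqrt (pIY * (1 - pIY))) * hκ1 - 100 * hBayes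
  · intro h1 h2 h3
    rw [hP1, hP2, h1, h3]
    ring
end
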